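/- For integers d ≥ 1, k with 1 ≤ k ≤ d-1, and any nonnegative integer i, write r_i = d·{i/d} (the remainder of i mod d). Then for the power series coefficient bound: if i = d·n_d + Σ_{j=1}^k j·n_j with all n_j, n_d ≥ 0, then Σ_{j=1}^k n_j + n_d ≥ ⌊i/d⌋ + ⌈r_i/k⌉. -/

import Mathlib

/-- Any representation of `i` as `d*n_d + Σ_{j=1}^k j*n_j` with nonnegative parts uses at
least `⌊i/d⌋ + ⌈(d·{i/d})/k⌉` parts, where `d·{i/d} = i % d`. -/
theorem keyCoefficientEstimate (d k i nd : ℕ) (n : ℕ → ℕ)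
    (hd : 1 ≤ d) (hk1 : 1 ≤ k) (hk2 : k ≤ d - 1)
    (hi : i = d * nd + ∑ j ∈ Finset.Icc 1 k, j * n j) :
    ((i / d : ℕ) : ℤ) + ⌈((i % d : ℕ) : ℚ) / k⌉
      ≤ ((∑ j ∈ Finset.Icc 1 k, n j : ℕ) : ℤ) + (nd : ℤ) := by
  have hS : ∑ j ∈ Finset.Icc 1 k, j * n j ≤ k * ∑ j ∈ Finset.Icc 1 k, n j := by
    rw [Finset.mul_sum]
    refine Finset.sum_le_sum fun j hj => ?_
    exact Nat.mul_le_mul_right _ (Finset.mem_Icc.mp hj).2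
  set N := ∑ j ∈ Finset.Icc 1 k, n j with hN
  set S := ∑ j ∈ Finset.Icc 1 k, j * n j with hSdef
  have hq : nd ≤ i / d := Nat.le_div_iff_mul_le (by omega) |>.mpr (by
    calc nd * d = d * nd := by ring
    _ ≤ i := by omega)
  have hdm : d * (i / d) + i % d = i := Nat.div_add_mod i d
  have hkd : k + 1 ≤ d := by omega
  -- move to integers
  have h1 : (d : ℤ) * (i / d : ℕ) + (i % d : ℕ) = (i : ℤ) := by exact_mod_cast hdm
  have h2 : (i : ℤ) = d * nd + S := by exact_mod_cast hi
  have h3 : (S : ℤ) ≤ k * N := by exact_mod_cast hS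
  have hq' : (nd : ℤ) ≤ (i / d : ℕ) := by exact_mod_cast hq
  have hkd' : (k : ℤ) + 1 ≤ d := by exact_mod_cast hkd
  have hr0 : (0 : ℤ) ≤ (i % d : ℕ) := Int.ofNat_nonneg _
  have hceil : ⌈((i % d : ℕ) : ℚ) / k⌉ ≤ (N : ℤ) - (i / d : ℕ) + nd := by
    rw [Int.ceil_le]
    rw [div_le_iff₀ (by exact_mod_cast hk1)]
    have key : ((i % d : ℕ) : ℤ) ≤ ((N : ℤ) - (i / d : ℕ) + nd) * k := by
      nlinarith [hq', hkd', h1, h2, h3, hr0]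
    calc ((i % d : ℕ) : ℚ) = (((i % d : ℕ) : ℤ) : ℚ) := by norm_cast
      _ ≤ ((((N : ℤ) - (i / d : ℕ) + nd) * k : ℤ) : ℚ) := Int.cast_le.mpr key
      _ = _ := by push_cast; ring
  linarith
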